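/- Let k > 1 and let f : ℝ → ℝ be the homothety f(x) = kx. Define the metric d'(x,y) = 2|x − y| / √((1 + x²)(1 + y²)) on ℝ (obtained by stereographic projection of S¹ onto ℝ). Then d' is a metric compatible with the usual topology of ℝ, and the ℤ-action n·x = fⁿ(x) = kⁿx is not expansive with respect to d'; in particular, f is not metric-independent expansive. -/

import Mathlib

/-- An action `φ` is expansive with respect to a distance function `d`. -/
def ExpansiveWith {G X : Type*} (φ : G → X → X) (d : X → X → ℝ) : Prop :=
  ∃ c > 0, ∀ x y : X, x ≠ y → ∃ g : G, c < d (φ g x) (φ g y)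

/-- Metric-independent expansiveness: expansive with respect to every metric
compatible with the topology. -/
def MIE {G X : Type*} [tX : TopologicalSpace X] (φ : G → X → X) : Prop :=
  ∀ m : MetricSpace X, m.toUniformSpace.toTopologicalSpace = tX →
    ExpansiveWith φ (fun x y => @dist X m.toDist x y)

/-- The metric on `ℝ` obtained from the stereographic projection of `S¹` onto `ℝ`:
`d'(x,y) = 2|x − y| / √((1 + x²)(1 + y²))`. -/
noncomputable def stereoDist (x y : ℝ) : ℝ :=
  2 * |x - y| / Real.sqrt ((1 + x ^ 2) * (1 + y ^ 2))

/-- Inverse stereographic projection, into `ℂ`. -/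
noncomputable def stereoMap (x : ℝ) : ℂ :=
  ⟨2 * x / (1 + x ^ 2), (x ^ 2 - 1) / (1 + x ^ 2)⟩

lemma one_add_sq_pos (x : ℝ) : (0:ℝ) < 1 + x ^ 2 := by positivity

lemma stereoDist_eq (x y : ℝ) : stereoDist x y = ‖stereoMap x - stereoMap y‖ := by
  have hx := one_add_sq_pos x
  have hy := one_add_sq_pos y
  rw [Complex.norm_def]
  have hns : Complex.normSq (stereoMap x - stereoMap y)
      = 4 * (x - y) ^ 2 / ((1 + x ^ 2) * (1 + y ^ 2)) := by
    simp only [Complex.normSq_apply, stereoMap, Complex.sub_re, Complex.sub_im]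
    field_simp
    ring
  rw [hns, stereoDist]
  rw [Real.sqrt_div' _ (by positivity), show (4:ℝ) * (x-y)^2 = (2 * |x - y|)^2 by
        rw [mul_pow, sq_abs]; ring,
      Real.sqrt_sq (by positivity)]

lemma stereoDist_comm (x y : ℝ) : stereoDist x y = stereoDist y x := by
  unfold stereoDist
  rw [abs_sub_comm, mul_comm (1 + x ^ 2)]

lemma stereoDist_self (x : ℝ) : stereoDist x x = 0 := by
  simp [stereoDist]

lemma stereoDist_triangle (x y z : ℝ) :
    stereoDist x z ≤ stereoDist x y + stereoDist y z := by
  rw [stereoDist_eq, stereoDist_eq, stereoDist_eq]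
  exact norm_sub_le_norm_sub_add_norm_sub _ _ _

lemma stereoDist_eq_zero {x y : ℝ} (h : stereoDist x y = 0) : x = y := by
  have hpos : (0:ℝ) < Real.sqrt ((1 + x ^ 2) * (1 + y ^ 2)) := by
    apply Real.sqrt_pos.2; positivity
  have : 2 * |x - y| = 0 := by
    by_contra hne
    have : stereoDist x y ≠ 0 := by
      unfold stereoDist
      exact div_ne_zero hne (ne_of_gt hpos)
    exact this h
  have : |x - y| = 0 := by linarith [abs_nonneg (x - y)]
  have := abs_eq_zero.1 this
  linarith

lemma sqrt_prod_ge_one (x y : ℝ) : 1 ≤ Real.sqrt ((1 + x ^ 2) * (1 + y ^ 2)) := by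
  rw [Real.le_sqrt (by norm_num) (by positivity)]
  nlinarith [sq_nonneg x, sq_nonneg y, sq_nonneg (x*y)]

lemma stereoDist_le (x y : ℝ) : stereoDist x y ≤ 2 * |x - y| := by
  unfold stereoDist
  exact div_le_self (by positivity) (sqrt_prod_ge_one x y)

lemma stereoDist_lower {x y δ : ℝ} (hδ : 0 < δ) (h : δ ≤ |x - y|) :
    2 * δ / (Real.sqrt (1 + x ^ 2) * (1 + |x| + δ)) ≤ stereoDist x y := by
  have hx := one_add_sq_pos x
  have hy := one_add_sq_pos y
  have hsx : (0:ℝ) < Real.sqrt (1 + x ^ 2) := Real.sqrt_pos.2 hx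
  have hy1 : Real.sqrt (1 + y ^ 2) ≤ 1 + |y| := by
    rw [show (1:ℝ) + |y| = Real.sqrt ((1 + |y|)^2) from
      (Real.sqrt_sq (by positivity)).symm]
    apply Real.sqrt_le_sqrt
    nlinarith [abs_nonneg y, sq_abs y]
  have hyx : |y| ≤ |x| + |x - y| := by
    have := abs_sub_abs_le_abs_sub y x
    rw [abs_sub_comm y x] at this
    linarith
  have hsplit : Real.sqrt ((1 + x ^ 2) * (1 + y ^ 2))
      = Real.sqrt (1 + x ^ 2) * Real.sqrt (1 + y ^ 2) := Real.sqrt_mul (le_of_lt hx) _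
  unfold stereoDist
  rw [hsplit]
  have hden : Real.sqrt (1 + x ^ 2) * Real.sqrt (1 + y ^ 2)
      ≤ Real.sqrt (1 + x ^ 2) * (1 + |x| + |x - y|) := by
    apply mul_le_mul_of_nonneg_left _ (le_of_lt hsx)
    linarith
  have habspos : (0:ℝ) < |x - y| := lt_of_lt_of_le hδ h
  have hden2 : (0:ℝ) < Real.sqrt (1 + x ^ 2) * Real.sqrt (1 + y ^ 2) := by
    apply mul_pos hsx (Real.sqrt_pos.2 hy)
  calc 2 * δ / (Real.sqrt (1 + x ^ 2) * (1 + |x| + δ))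
      ≤ 2 * |x - y| / (Real.sqrt (1 + x ^ 2) * (1 + |x| + |x - y|)) := by
        rw [div_le_div_iff₀ (by positivity) (by positivity)]
        have h1 : (0:ℝ) ≤ Real.sqrt (1 + x ^ 2) := le_of_lt hsx
        nlinarith [mul_nonneg (mul_nonneg h1 (sub_nonneg.2 h))
          (by positivity : (0:ℝ) ≤ 1 + |x|)]
    _ ≤ 2 * |x - y| / (Real.sqrt (1 + x ^ 2) * Real.sqrt (1 + y ^ 2)) := by
        apply div_le_div_of_nonneg_left (by positivity) hden2 hden

/-- The metric space structure on `ℝ` given by `stereoDist`, whose topology is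
definitionally the standard one. -/
noncomputable def stereoMetric : MetricSpace ℝ :=
  MetricSpace.ofDistTopology stereoDist stereoDist_self stereoDist_comm stereoDist_triangle
    (by
      intro s
      constructor
      · intro hs x hxs
        obtain ⟨δ, hδ, hball⟩ := Metric.isOpen_iff.1 hs x hxs
        refine ⟨2 * δ / (Real.sqrt (1 + x ^ 2) * (1 + |x| + δ)), by positivity, ?_⟩
        intro y hy
        apply hball
        rw [Metric.mem_ball, Real.dist_eq]
        by_contra hcon
        push_neg at hcon
        rw [abs_sub_comm] at hcon
        exact absurd hy (not_lt.2 (stereoDist_lower hδ hcon))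
      · intro h
        rw [Metric.isOpen_iff]
        intro x hxs
        obtain ⟨ε, hε, hball⟩ := h x hxs
        refine ⟨ε / 2, by positivity, ?_⟩
        intro y hy
        rw [Metric.mem_ball, Real.dist_eq, abs_sub_comm] at hy
        exact hball y (lt_of_le_of_lt (stereoDist_le x y) (by linarith)))
    (fun x y h => stereoDist_eq_zero h)

lemma key_bound {a y : ℝ} (ha : 0 < a) (hy : 1 ≤ y) :
    stereoDist a (a * y) ≤ 2 * (y - 1) := by
  have hden : a ≤ Real.sqrt ((1 + a ^ 2) * (1 + (a * y) ^ 2)) := by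
    rw [Real.le_sqrt (le_of_lt ha) (by positivity)]
    nlinarith [sq_nonneg (a*y), sq_nonneg a, sq_nonneg (a^2*y)]
  have habs : |a - a * y| = a * (y - 1) := by
    rw [show a - a * y = -(a * (y - 1)) by ring, abs_neg, abs_of_nonneg (by nlinarith)]
  unfold stereoDist
  rw [habs]
  calc 2 * (a * (y - 1)) / Real.sqrt ((1 + a ^ 2) * (1 + (a * y) ^ 2))
      ≤ 2 * (a * (y - 1)) / a := by
        apply div_le_div_of_nonneg_left (by nlinarith) ha hden
    _ = 2 * (y - 1) := by field_simp

lemma not_expansive (k : ℝ) (hk : 1 < k) :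
    ¬ ExpansiveWith (fun (n : ℤ) (x : ℝ) => k ^ n * x) stereoDist := by
  rintro ⟨c, hc, hexp⟩
  obtain ⟨n, hn⟩ := hexp 1 (1 + c / 2) (by intro h; nlinarith [congrArg id h])
  have ha : (0:ℝ) < k ^ n := zpow_pos (by linarith) n
  have hb := key_bound ha (show (1:ℝ) ≤ 1 + c / 2 by linarith)
  simp only [mul_one] at hn hb
  have : 2 * (1 + c / 2 - 1) = c := by ring
  rw [this] at hb
  exact absurd hn (not_lt.2 hb)

/-- For `k > 1`, the homothety `f(x) = kx` of `ℝ`: the distance `d'` coming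
from stereographic projection is a metric compatible with the usual topology of `ℝ`,
the induced `ℤ`-action `n ⬝ x = kⁿ x` is not expansive with respect to `d'`, and in
particular `f` is not metric-independent expansive. -/
theorem homothety_not_mie (k : ℝ) (hk : 1 < k) :
    (∃ m : MetricSpace ℝ,
      (∀ x y : ℝ, @dist ℝ m.toDist x y = stereoDist x y) ∧
      m.toUniformSpace.toTopologicalSpace = (inferInstance : TopologicalSpace ℝ)) ∧
    ¬ ExpansiveWith (fun (n : ℤ) (x : ℝ) => k ^ n * x) stereoDist ∧
    ¬ MIE (fun (n : ℤ) (x : ℝ) => k ^ n * x) := by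
  refine ⟨⟨stereoMetric, fun x y => rfl, rfl⟩, not_expansive k hk, ?_⟩
  intro hmie
  have := hmie stereoMetric rfl
  exact not_expansive k hk this
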